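/- Let k ≥ 1 be an integer. For every z ∈ Z_k and every a ∈ ℝ, |a| ≤ ‖z + a·u‖ in X_k. (Equivalently, the linear functional φ on span(Z_k ∪ {u}) defined by φ(z + a·u) = a has norm at most 1.) -/

import Mathlib

open MeasureTheory Set ENNReal

/-- The weak `L^p` "norm": `sup { (∫_B |f| dμ) / μ(B)^(1/q) }` over measurable `B`
with `0 < μ B < ∞`, computed in `ℝ≥0∞`. -/
noncomputable def wnorm {α : Type*} [MeasurableSpace α] (q : ℝ) (μ : Measure α)
    (f : α → ℝ) : ℝ≥0∞ :=
  ⨆ (B : Set α) (_ : MeasurableSet B ∧ 0 < μ B ∧ μ B < ⊤),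
    (∫⁻ x in B, ENNReal.ofReal |f x| ∂μ) / μ B ^ (1 / q)

/-- The set `{f ≠ 0}` is σ-finite for `μ`. -/
def SigmaFinSupp {α : Type*} [MeasurableSpace α] (μ : Measure α) (f : α → ℝ) : Prop :=
  ∃ s : ℕ → Set α, {x | f x ≠ 0} ⊆ (⋃ n, s n) ∧ ∀ n, μ (s n) < ⊤

/-- Membership in the weak `L^p` space. -/
def MemW {α : Type*} [MeasurableSpace α] (q : ℝ) (μ : Measure α) (f : α → ℝ) : Prop :=
  Measurable f ∧ SigmaFinSupp μ f ∧ wnorm q μ f < ⊤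

/-- The ambient space of `X_k = (∑_{n≥0} ⊕ ℓ^{p,∞}(k·2^n))_{ℓ∞}`: all sequences
`x = (x_n)` with `x_n` a `k·2^n`-tuple of reals. -/
abbrev XFull (k : ℕ) := (n : ℕ) → Fin (k * 2 ^ n) → ℝ

/-- The norm of `X_k`: `sup_n ‖x_n‖`, where `‖·‖` is the weak `ℓ^p` norm
(counting measure on `Fin (k·2^n)`). -/
noncomputable def Xnorm (q : ℝ) (k : ℕ) (x : XFull k) : ℝ≥0∞ :=
  ⨆ n, wnorm q (Measure.count : Measure (Fin (k * 2 ^ n))) (x n)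

/-- Membership in `X_k`. -/
def MemX (q : ℝ) (k : ℕ) (x : XFull k) : Prop := Xnorm q k x < ⊤

lemma two_mul_succ_lt {k n j : ℕ} (h : j < k * 2 ^ n) : 2 * j + 1 < k * 2 ^ (n + 1) := by
  rw [pow_succ, ← mul_assoc]; omega

/-- `Z_k ⊆ X_k`: elements whose coordinate sums eventually vanish. -/
def Zset (q : ℝ) (k : ℕ) : Set (XFull k) :=
  {x | MemX q k x ∧ ∃ i : ℕ, ∀ n ≥ i, ∑ j, x n j = 0}

/-- The element `u ∈ X_k`, `u_n(j) = (k·2^n)^{-1/p}`. -/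
noncomputable def uElt (p : ℝ) (k : ℕ) : XFull k :=
  fun n _ => ((k : ℝ) * 2 ^ n) ^ (-(1 / p))

/-- Lemma 3 of the paper: the functional `φ(z + a·u) = a` on `span(Z_k ∪ {u})` has norm
at most `1`; equivalently, `|a| ≤ ‖z + a·u‖` for every `z ∈ Z_k` and `a ∈ ℝ`. -/
theorem abs_le_norm_add_smul_u (p q : ℝ) (hp : 1 < p) (hq : q = p / (p - 1))
    (k : ℕ) (hk : 1 ≤ k) (z : XFull k) (hz : z ∈ Zset q k) (a : ℝ) :
    ENNReal.ofReal |a| ≤ Xnorm q k (z + a • uElt p k) := by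
  obtain ⟨hx, i, hi⟩ := hz
  have hsum : ∑ j, z i j = 0 := hi i le_rfl
  set m : ℕ := k * 2 ^ i with hm
  have hmpos : 0 < m := by positivity
  set c : ℝ := (m : ℝ) with hc
  have hcpos : 0 < c := by rw [hc]; exact_mod_cast hmpos
  have hck : (k : ℝ) * 2 ^ i = c := by push_cast [hc, hm]; ring
  have hqpos : 0 < q := by
    rw [hq]; exact div_pos (by linarith) (by linarith)
  have hexp : 1 + -(1/p) = 1/q := by
    have h1 : p ≠ 0 := by linarith
    have h2 : p - 1 ≠ 0 := by intro h; linarith [sub_eq_zero.mp h]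
    have h3 : q * (p - 1) = p := by rw [hq]; exact div_mul_cancel₀ p h2
    field_simp [hq]; linear_combination h3
  set f : Fin m → ℝ := (z + a • uElt p k) i with hf
  -- the sum of f
  have hsumf : ∑ j, f j = a * c ^ (1/q) := by
    have : ∀ j : Fin m, f j = z i j + a * c ^ (-(1/p)) := by
      intro j; simp [hf, uElt, hck]
    rw [Finset.sum_congr rfl (fun j _ => this j), Finset.sum_add_distrib, hsum,
      zero_add, Finset.sum_const, Finset.card_univ, Fintype.card_fin, nsmul_eq_mul]
    rw [← hexp, Real.rpow_add hcpos, Real.rpow_one, ← hc]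
    ring
  have habs : |a| * c ^ (1/q) ≤ ∑ j, |f j| := by
    calc |a| * c ^ (1/q) = |a * c ^ (1/q)| := by
          rw [abs_mul, abs_of_pos (Real.rpow_pos_of_pos hcpos _)]
      _ = |∑ j, f j| := by rw [hsumf]
      _ ≤ ∑ j, |f j| := Finset.abs_sum_le_sum_abs _ _
  -- count measure of univ
  have hcount : (Measure.count : Measure (Fin m)) univ = (m : ℝ≥0∞) := by
    rw [Measure.count_univ]; simp
  have hm0 : (m : ℝ≥0∞) ≠ 0 := by exact_mod_cast hmpos.ne'
  have hmtop : (m : ℝ≥0∞) ≠ ⊤ := by simp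
  have hr0 : (m : ℝ≥0∞) ^ (1/q) ≠ 0 :=
    (ENNReal.rpow_pos (pos_iff_ne_zero.mpr hm0) hmtop).ne'
  have hrtop : (m : ℝ≥0∞) ^ (1/q) ≠ ⊤ := by
    exact ENNReal.rpow_ne_top_of_nonneg (by positivity) hmtop
  -- lower bound for the integral
  have hint : ENNReal.ofReal |a| * (m : ℝ≥0∞) ^ (1/q)
      ≤ ∫⁻ x in (univ : Set (Fin m)), ENNReal.ofReal |f x| ∂Measure.count := by
    rw [Measure.restrict_univ, lintegral_count, tsum_fintype]
    calc ENNReal.ofReal |a| * (m : ℝ≥0∞) ^ (1/q)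
        = ENNReal.ofReal (|a| * c ^ (1/q)) := by
          rw [ENNReal.ofReal_mul (abs_nonneg a), ← ENNReal.ofReal_rpow_of_pos hcpos]
          congr 1
          rw [hc, ENNReal.ofReal_natCast]
      _ ≤ ENNReal.ofReal (∑ j, |f j|) := ENNReal.ofReal_le_ofReal habs
      _ = ∑ j, ENNReal.ofReal |f j| := ENNReal.ofReal_sum_of_nonneg
          (fun j _ => abs_nonneg _)
  -- now bound the wnorm from below
  have hw : ENNReal.ofReal |a| ≤ wnorm q (Measure.count : Measure (Fin m)) f := by
    have hB : MeasurableSet (univ : Set (Fin m)) ∧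
        0 < Measure.count (univ : Set (Fin m)) ∧
        Measure.count (univ : Set (Fin m)) < ⊤ := by
      refine ⟨MeasurableSet.univ, ?_, ?_⟩ <;> rw [hcount]
      · exact pos_iff_ne_zero.mpr hm0
      · exact lt_top_iff_ne_top.mpr hmtop
    refine le_trans ?_ (le_iSup₂ (f := fun B _ =>
      (∫⁻ x in B, ENNReal.ofReal |f x| ∂Measure.count) /
        Measure.count B ^ (1/q)) (univ : Set (Fin m)) hB)
    rw [hcount]
    calc ENNReal.ofReal |a|
        = ENNReal.ofReal |a| * (m : ℝ≥0∞) ^ (1/q) / (m : ℝ≥0∞) ^ (1/q) := by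
          rw [mul_div_assoc, ENNReal.div_self hr0 hrtop, mul_one]
      _ ≤ _ := ENNReal.div_le_div_right hint _
  exact le_trans hw (le_iSup (fun n => wnorm q
    (Measure.count : Measure (Fin (k * 2 ^ n))) ((z + a • uElt p k) n)) i)
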